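/- Let A ⊆ [0,1] be an arbitrary set, let μ₀ denote Lebesgue measure on [0,1] regarded as an element of Δ([0,1]), and let δ₁ ∈ Δ([0,1]) be the Dirac measure at 1. Let E = (([0,1] ∖ A) × {μ₀}) ∪ (A × {δ₁}) ⊆ [0,1] × Δ([0,1]). If there exists a Borel probability measure ν on [0,1] × Δ([0,1]) whose pushforward under the first projection equals μ₀ and whose completion assigns measure 1 to E (i.e., the complement of E is ν-null), then A is Lebesgue measurable. -/

import Mathlib

open MeasureTheory

/-- `Δ(ℝ)` (the space of Borel probability measures with the topology of weak convergence)
is equipped with the Borel σ-algebra of that topology. -/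
noncomputable instance : MeasurableSpace (ProbabilityMeasure ℝ) :=
  borel (ProbabilityMeasure ℝ)

instance : BorelSpace (ProbabilityMeasure ℝ) := ⟨rfl⟩

/-- `μ₀`: Lebesgue measure restricted to `[0,1]`, as a Borel probability measure. -/
noncomputable def mu0 : ProbabilityMeasure ℝ :=
  ⟨volume.restrict (Set.Icc (0 : ℝ) 1), by
    constructor
    rw [Measure.restrict_apply_univ, Real.volume_Icc]
    norm_num⟩

/-- `δ₁`: the Dirac measure at `1`, as a Borel probability measure. -/
noncomputable def delta1 : ProbabilityMeasure ℝ :=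
  ⟨Measure.dirac (1 : ℝ), inferInstance⟩

/-- Let `A ⊆ [0,1]` be arbitrary and let
`E = (([0,1] \ A) × {μ₀}) ∪ (A × {δ₁}) ⊆ [0,1] × Δ([0,1])`.  If there is a Borel probability
measure `ν` on `[0,1] × Δ([0,1])` whose pushforward under the first projection is `μ₀` and
whose completion assigns measure `1` to `E` (the complement of `E` is `ν`-null), then `A` is
Lebesgue measurable. -/
theorem stmt_17 (A : Set ℝ) (hA : A ⊆ Set.Icc (0 : ℝ) 1)
    (E : Set (ℝ × ProbabilityMeasure ℝ))
    (hE : E = ((Set.Icc (0 : ℝ) 1 \ A) ×ˢ ({mu0} : Set (ProbabilityMeasure ℝ))) ∪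
      (A ×ˢ ({delta1} : Set (ProbabilityMeasure ℝ))))
    (ν : ProbabilityMeasure (ℝ × ProbabilityMeasure ℝ))
    (hmarg : (ν : Measure (ℝ × ProbabilityMeasure ℝ)).map Prod.fst = (mu0 : Measure ℝ))
    (hfull : (ν : Measure (ℝ × ProbabilityMeasure ℝ)) Eᶜ = 0) :
    NullMeasurableSet A (volume : Measure ℝ) := by
  classical
  set μ : Measure (ℝ × ProbabilityMeasure ℝ) := (ν : Measure (ℝ × ProbabilityMeasure ℝ)) with hμ
  -- mu0 ≠ delta1
  have hne : mu0 ≠ delta1 := by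
    intro h
    have h1 : (mu0 : Measure ℝ) {1} = (delta1 : Measure ℝ) {1} := by rw [h]
    have h2 : (mu0 : Measure ℝ) {1} = 0 := by
      show (volume.restrict (Set.Icc (0:ℝ) 1)) {1} = 0
      rw [Measure.restrict_apply (measurableSet_singleton _)]
      exact measure_mono_null Set.inter_subset_left (by simp)
    have h3 : (delta1 : Measure ℝ) {1} = 1 := by
      show (Measure.dirac (1:ℝ)) {1} = 1
      simp
    rw [h2, h3] at h1
    exact zero_ne_one h1
  -- the two horizontal lines
  set D0 : Set (ℝ × ProbabilityMeasure ℝ) := Set.univ ×ˢ ({mu0} : Set (ProbabilityMeasure ℝ)) with hD0def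
  set D1 : Set (ℝ × ProbabilityMeasure ℝ) := Set.univ ×ˢ ({delta1} : Set (ProbabilityMeasure ℝ)) with hD1def
  have hD0 : MeasurableSet D0 := MeasurableSet.univ.prod (measurableSet_singleton _)
  have hD1 : MeasurableSet D1 := MeasurableSet.univ.prod (measurableSet_singleton _)
  have hEsub : E ⊆ D0 ∪ D1 := by
    rw [hE]
    rintro ⟨x, m⟩ (⟨-, hm⟩ | ⟨-, hm⟩)
    · exact Or.inl ⟨trivial, hm⟩
    · exact Or.inr ⟨trivial, hm⟩
  have hcomp : μ ((D0 ∪ D1)ᶜ) = 0 :=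
    measure_mono_null (Set.compl_subset_compl.2 hEsub) hfull
  -- null sets
  have hnull0 : μ (Prod.fst ⁻¹' A ∩ D0) = 0 := by
    refine measure_mono_null ?_ hfull
    rintro ⟨x, m⟩ ⟨hxA, -, hm⟩
    simp only [Set.mem_compl_iff, hE]
    rintro (⟨⟨-, hxA'⟩, -⟩ | ⟨-, hm'⟩)
    · exact hxA' hxA
    · exact hne ((Set.mem_singleton_iff.1 hm).symm.trans (Set.mem_singleton_iff.1 hm'))
  have hnull1 : μ (Prod.fst ⁻¹' (Set.Icc (0:ℝ) 1 \ A) ∩ D1) = 0 := by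
    refine measure_mono_null ?_ hfull
    rintro ⟨x, m⟩ ⟨⟨-, hxA⟩, -, hm⟩
    simp only [Set.mem_compl_iff, hE]
    rintro (⟨-, hm'⟩ | ⟨hxA', -⟩)
    · exact hne ((Set.mem_singleton_iff.1 hm').symm.trans (Set.mem_singleton_iff.1 hm))
    · exact hxA hxA'
  -- measurable null hulls
  set T0 := toMeasurable μ (Prod.fst ⁻¹' A ∩ D0) with hT0def
  set T1 := toMeasurable μ (Prod.fst ⁻¹' (Set.Icc (0:ℝ) 1 \ A) ∩ D1) with hT1def
  have hT0m : MeasurableSet T0 := measurableSet_toMeasurable _ _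
  have hT1m : MeasurableSet T1 := measurableSet_toMeasurable _ _
  have hT0null : μ T0 = 0 := by rw [hT0def, measure_toMeasurable]; exact hnull0
  have hT1null : μ T1 = 0 := by rw [hT1def, measure_toMeasurable]; exact hnull1
  -- sections
  set S : Set ℝ := (fun x => (x, mu0)) ⁻¹' T0 with hSdef
  set S' : Set ℝ := (fun x => (x, delta1)) ⁻¹' T1 with hS'def
  have hSm : MeasurableSet S := (measurable_id.prodMk measurable_const) hT0m
  have hS'm : MeasurableSet S' := (measurable_id.prodMk measurable_const) hT1m
  have hAS : A ⊆ S := by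
    intro x hx
    exact subset_toMeasurable _ _ ⟨hx, trivial, rfl⟩
  have hAS' : Set.Icc (0:ℝ) 1 \ A ⊆ S' := by
    intro x hx
    exact subset_toMeasurable _ _ ⟨hx, trivial, rfl⟩
  -- pushforward identity
  have hmap : ∀ (U : Set ℝ), MeasurableSet U → (mu0 : Measure ℝ) U = μ (Prod.fst ⁻¹' U) := by
    intro U hU
    rw [← hmarg, Measure.map_apply measurable_fst hU]
  -- bound mu0 S ≤ μ D1
  have hbound0 : (mu0 : Measure ℝ) S ≤ μ D1 := by
    rw [hmap S hSm]
    have hsub : Prod.fst ⁻¹' S ⊆ D1 ∪ (T0 ∪ (D0 ∪ D1)ᶜ) := by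
      rintro ⟨x, m⟩ hx
      by_cases h1 : (x, m) ∈ D1
      · exact Or.inl h1
      by_cases h0 : (x, m) ∈ D0
      · refine Or.inr (Or.inl ?_)
        have hm : m = mu0 := h0.2
        rw [hm]
        exact hx
      · exact Or.inr (Or.inr (fun h => h.elim h0 h1))
    calc μ (Prod.fst ⁻¹' S) ≤ μ (D1 ∪ (T0 ∪ (D0 ∪ D1)ᶜ)) := measure_mono hsub
      _ ≤ μ D1 + μ (T0 ∪ (D0 ∪ D1)ᶜ) := measure_union_le _ _
      _ ≤ μ D1 + (μ T0 + μ ((D0 ∪ D1)ᶜ)) := by gcongr; exact measure_union_le _ _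
      _ = μ D1 := by rw [hT0null, hcomp]; simp
  have hbound1 : (mu0 : Measure ℝ) S' ≤ μ D0 := by
    rw [hmap S' hS'm]
    have hsub : Prod.fst ⁻¹' S' ⊆ D0 ∪ (T1 ∪ (D0 ∪ D1)ᶜ) := by
      rintro ⟨x, m⟩ hx
      by_cases h0 : (x, m) ∈ D0
      · exact Or.inl h0
      by_cases h1 : (x, m) ∈ D1
      · refine Or.inr (Or.inl ?_)
        have hm : m = delta1 := h1.2
        rw [hm]
        exact hx
      · exact Or.inr (Or.inr (fun h => h.elim h0 h1))
    calc μ (Prod.fst ⁻¹' S') ≤ μ (D0 ∪ (T1 ∪ (D0 ∪ D1)ᶜ)) := measure_mono hsub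
      _ ≤ μ D0 + μ (T1 ∪ (D0 ∪ D1)ᶜ) := measure_union_le _ _
      _ ≤ μ D0 + (μ T1 + μ ((D0 ∪ D1)ᶜ)) := by gcongr; exact measure_union_le _ _
      _ = μ D0 := by rw [hT1null, hcomp]; simp
  -- sum ≤ 1
  have hdisj : Disjoint D1 D0 := by
    rw [Set.disjoint_left]
    rintro ⟨x, m⟩ ⟨-, h1⟩ ⟨-, h0⟩
    exact hne ((Set.mem_singleton_iff.1 h0).symm.trans (Set.mem_singleton_iff.1 h1))
  have hsum : μ D1 + μ D0 ≤ 1 := by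
    rw [← measure_union hdisj hD0]
    exact prob_le_one
  -- mu0 (S ∪ S') = 1
  have hIcc : (mu0 : Measure ℝ) (Set.Icc (0:ℝ) 1) = 1 := by
    show (volume.restrict (Set.Icc (0:ℝ) 1)) _ = 1
    rw [Measure.restrict_apply measurableSet_Icc, Set.inter_self, Real.volume_Icc]
    norm_num
  have hmu0prob : IsProbabilityMeasure (mu0 : Measure ℝ) := mu0.2
  have hunion : (mu0 : Measure ℝ) (S ∪ S') = 1 := by
    refine le_antisymm prob_le_one ?_
    rw [← hIcc]
    refine measure_mono ?_
    intro x hx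
    by_cases hxA : x ∈ A
    · exact Or.inl (hAS hxA)
    · exact Or.inr (hAS' ⟨hx, hxA⟩)
  have hinter : (mu0 : Measure ℝ) (S ∩ S') = 0 := by
    have hadd : (mu0 : Measure ℝ) (S ∪ S') + (mu0 : Measure ℝ) (S ∩ S')
        = (mu0 : Measure ℝ) S + (mu0 : Measure ℝ) S' := measure_union_add_inter S hS'm
    have hle : (mu0 : Measure ℝ) (S ∪ S') + (mu0 : Measure ℝ) (S ∩ S') ≤ 1 := by
      rw [hadd]
      calc (mu0 : Measure ℝ) S + (mu0 : Measure ℝ) S' ≤ μ D1 + μ D0 := add_le_add hbound0 hbound1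
        _ ≤ 1 := hsum
    rw [hunion] at hle
    have hle' : (1 : ENNReal) + (mu0 : Measure ℝ) (S ∩ S') ≤ 1 + 0 := by simpa using hle
    have := (ENNReal.add_le_add_iff_left (by norm_num : (1:ENNReal) ≠ ⊤)).1 hle'
    exact le_antisymm this zero_le
  -- final set
  set B : Set ℝ := (S \ S') ∩ Set.Icc (0:ℝ) 1 with hBdef
  have hBm : MeasurableSet B := (hSm.diff hS'm).inter measurableSet_Icc
  have hvol : volume (S ∩ S' ∩ Set.Icc (0:ℝ) 1) = 0 := by
    have : (mu0 : Measure ℝ) (S ∩ S') = volume (S ∩ S' ∩ Set.Icc (0:ℝ) 1) := by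
      show (volume.restrict (Set.Icc (0:ℝ) 1)) (S ∩ S') = _
      rw [Measure.restrict_apply (hSm.inter hS'm)]
    rw [← this]
    exact hinter
  have hae : B =ᵐ[volume] A := by
    rw [Filter.eventuallyEq_set]
    have h1 : {x | ¬ (x ∈ B ↔ x ∈ A)} ⊆ S ∩ S' ∩ Set.Icc (0:ℝ) 1 := by
      intro x hx
      simp only [Set.mem_setOf_eq] at hx
      by_cases hxA : x ∈ A
      · have hxB : x ∉ B := fun h => hx (iff_of_true h hxA)
        have hxIcc := hA hxA
        have hxS := hAS hxA
        have hxS' : x ∈ S' := by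
          by_contra h
          exact hxB ⟨⟨hxS, h⟩, hxIcc⟩
        exact ⟨⟨hxS, hxS'⟩, hxIcc⟩
      · have hxB : x ∈ B := by
          by_contra h
          exact hx (iff_of_false h hxA)
        exact absurd (hAS' ⟨hxB.2, hxA⟩) hxB.1.2
    exact measure_mono_null (by intro x hx; exact h1 hx) hvol
  exact hBm.nullMeasurableSet.congr hae
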